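/- Let Λ be a commutative Noetherian regular local ring and R a commutative Λ-algebra that is free of finite rank as a Λ-module and admits an isomorphism of R-modules Hom_Λ(R, Λ) ≅ R. Let P be an R-module admitting an exact sequence 0 → R^a →f R^a → P → 0. Then Ext¹_R(P, R) admits an exact sequence of the same form 0 → R^a → R^a → Ext¹_R(P, R) → 0 (induced by the dual map of f), and there is an isomorphism of R-modules Ext¹_R(Ext¹_R(P, R), R) ≅ P. -/

import Mathlib

open Function CategoryTheory

/-- A commutative Noetherian local ring is regular if its maximal ideal can be generated by
(Krull dimension of the ring) many elements. -/
def IsRegularLocal (A : Type*) [CommRing A] [IsLocalRing A] : Prop :=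
  ∃ s : Finset A, Ideal.span (s : Set A) = IsLocalRing.maximalIdeal A ∧
    (s.card : WithBot ℕ∞) = ringKrullDim A

/-- The `n`-th Ext module of two modules over a commutative ring. -/
noncomputable def extMod (R : Type u) [CommRing R] (n : ℕ) (M N : ModuleCat.{u} R) :
    ModuleCat.{u} R :=
  ((Ext R (ModuleCat.{u} R) n).obj (Opposite.op M)).obj N


section McCoy

variable {R : Type*} [CommRing R]

lemma mccoy_det_mem_nonZeroDivisors {a : ℕ} (M : Matrix (Fin a) (Fin a) R)
    (h : Function.Injective M.mulVec) : M.det ∈ nonZeroDivisors R := by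
  classical
  rw [mem_nonZeroDivisors_iff_right]
  intro r hr
  by_contra hr0
  set T : ℕ → Prop := fun k => ∃ ρ σ : Fin k → Fin a, Function.Injective ρ ∧
    Function.Injective σ ∧ r * (M.submatrix ρ σ).det ≠ 0 with hT
  have hT0 : T 0 := ⟨Fin.elim0, Fin.elim0, fun x => x.elim0, fun x => x.elim0, by
    simpa [Matrix.det_fin_zero] using hr0⟩
  have hTle : ∀ k, T k → k ≤ a := by
    rintro k ⟨ρ, _, hρ, -, -⟩
    simpa using Fintype.card_le_of_injective ρ hρ
  have hTa : ¬ T a := by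
    rintro ⟨ρ, σ, hρ, hσ, hne⟩
    apply hne
    let e₁ : Fin a ≃ Fin a := Equiv.ofBijective ρ (Finite.injective_iff_bijective.1 hρ)
    let e₂ : Fin a ≃ Fin a := Equiv.ofBijective σ (Finite.injective_iff_bijective.1 hσ)
    have hsub : M.submatrix ρ σ =
        ((M.submatrix e₂ e₂).submatrix (e₁.trans e₂.symm : Equiv.Perm (Fin a)) id) := by
      ext i j
      simp [e₁, e₂, Matrix.submatrix_apply, Equiv.ofBijective_apply, Equiv.ofBijective_apply_symm_apply]
    have hthis := Matrix.det_permute (e₁.trans e₂.symm : Equiv.Perm (Fin a)) (M.submatrix e₂ e₂)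
    rw [hsub, hthis, Matrix.det_submatrix_equiv_self, mul_left_comm, hr, mul_zero]
  set t := Nat.findGreatest T a with htdef
  have ht : T t := Nat.findGreatest_spec (Nat.zero_le a) hT0
  have ht1 : ¬ T (t + 1) := by
    by_cases hle : t + 1 ≤ a
    · exact Nat.findGreatest_is_greatest (Nat.lt_succ_self t) hle
    · intro hc; exact hle (hTle _ hc)
  have hta : t < a := lt_of_le_of_ne (hTle t ht) (fun hEq => hTa (hEq ▸ ht))
  obtain ⟨ρ, σ, hρ, hσ, hd⟩ := ht
  have hnsurj : ¬ Function.Surjective σ := by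
    intro hs
    have := Fintype.card_le_of_surjective σ hs
    simp only [Fintype.card_fin] at this
    omega
  rw [Function.Surjective] at hnsurj
  push_neg at hnsurj
  obtain ⟨c₀, hc₀⟩ := hnsurj
  set σ' : Fin (t + 1) → Fin a := Fin.snoc σ c₀ with hσ'def
  have hσ'cast : ∀ j : Fin t, σ' j.castSucc = σ j := fun j => by simp [hσ'def]
  have hσ'last : σ' (Fin.last t) = c₀ := by simp [hσ'def]
  have hσ' : Function.Injective σ' := by
    intro i j hij
    rcases Fin.eq_castSucc_or_eq_last i with ⟨i', rfl⟩ | rfl <;>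
      rcases Fin.eq_castSucc_or_eq_last j with ⟨j', rfl⟩ | rfl
    · rw [hσ'cast, hσ'cast] at hij
      exact congrArg Fin.castSucc (hσ hij)
    · rw [hσ'cast, hσ'last] at hij; exact absurd hij (hc₀ i')
    · rw [hσ'cast, hσ'last] at hij; exact absurd hij.symm (hc₀ j')
    · rfl
  set y : Fin (t + 1) → R := fun j =>
    (-1 : R) ^ (t + (j : ℕ)) * (M.submatrix ρ (σ' ∘ j.succAbove)).det with hy
  set x : Fin a → R := fun c => r * ∑ j, if σ' j = c then y j else 0 with hx
  have hxσ' : ∀ j₀, x (σ' j₀) = r * y j₀ := by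
    intro j₀
    rw [hx]
    simp only [hσ'.eq_iff]
    rw [Finset.sum_ite_eq' Finset.univ j₀ y]
    simp
  have hxlast : x (σ' (Fin.last t)) = r * (M.submatrix ρ σ).det := by
    rw [hxσ', hy]
    have h1 : σ' ∘ (Fin.last t).succAbove = σ := by
      rw [Fin.succAbove_last, hσ'def, Fin.snoc_comp_castSucc]
    simp only [h1, Fin.val_last]
    rw [Even.neg_one_pow ⟨t, by ring⟩, one_mul]
  have hx0 : x ≠ 0 := by
    intro hcc
    rw [← hxlast] at hd
    exact hd (by rw [hcc]; rfl)
  have hMx : M.mulVec x = 0 := by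
    funext i
    have hdet : (M.submatrix (Fin.snoc ρ i) σ').det = ∑ j, M i (σ' j) * y j := by
      rw [Matrix.det_succ_row _ (Fin.last t)]
      refine Finset.sum_congr rfl fun j _ => ?_
      have h2 : (M.submatrix (Fin.snoc ρ i) σ').submatrix (Fin.last t).succAbove j.succAbove =
          M.submatrix ρ (σ' ∘ j.succAbove) := by
        rw [Matrix.submatrix_submatrix, Fin.succAbove_last, Fin.snoc_comp_castSucc]
      rw [h2, hy]
      simp only [Matrix.submatrix_apply, Fin.snoc_last, Fin.val_last]
      ring
    have hsum : M.mulVec x i = r * (M.submatrix (Fin.snoc ρ i) σ').det := by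
      rw [hdet, Matrix.mulVec, dotProduct]
      have hterm : ∀ c, M i c * x c = r * ∑ j, (if σ' j = c then M i (σ' j) * y j else 0) := by
        intro c
        rw [hx]
        simp only []
        rw [Finset.mul_sum, Finset.mul_sum, Finset.mul_sum]
        refine Finset.sum_congr rfl fun j _ => ?_
        split_ifs with hh
        · rw [hh]; ring
        · ring
      rw [Finset.sum_congr rfl (fun c _ => hterm c), ← Finset.mul_sum]
      congr 1
      rw [Finset.sum_comm]
      refine Finset.sum_congr rfl fun j _ => ?_
      rw [Finset.sum_ite_eq Finset.univ (σ' j) (fun _ => M i (σ' j) * y j)]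
      simp
    rw [hsum]
    by_cases hi : ∃ p, ρ p = i
    · obtain ⟨p, rfl⟩ := hi
      have : (M.submatrix (Fin.snoc ρ (ρ p)) σ').det = 0 := by
        refine Matrix.det_zero_of_row_eq (i := p.castSucc) (j := Fin.last t)
          (Fin.ne_last_of_lt (Fin.castSucc_lt_last p)) ?_
        funext q
        simp [Matrix.submatrix_apply, Fin.snoc_castSucc, Fin.snoc_last]
      rw [this, mul_zero]; rfl
    · have hρ' : Function.Injective (Fin.snoc ρ i : Fin (t+1) → Fin a) := by
        intro u v huv
        rcases Fin.eq_castSucc_or_eq_last u with ⟨u', rfl⟩ | rfl <;>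
          rcases Fin.eq_castSucc_or_eq_last v with ⟨v', rfl⟩ | rfl
        · rw [Fin.snoc_castSucc, Fin.snoc_castSucc] at huv
          exact congrArg Fin.castSucc (hρ huv)
        · rw [Fin.snoc_castSucc, Fin.snoc_last] at huv
          exact absurd ⟨u', huv⟩ hi
        · rw [Fin.snoc_castSucc, Fin.snoc_last] at huv
          exact absurd ⟨v', huv.symm⟩ hi
        · rfl
      have h0 : r * (M.submatrix (Fin.snoc ρ i) σ').det = 0 :=
        not_not.mp (fun hcon => ht1 ⟨_, _, hρ', hσ', hcon⟩)
      rw [h0]; rfl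
  have := h (a₁ := x) (a₂ := 0) (by rw [hMx, Matrix.mulVec_zero])
  exact hx0 this

lemma mccoy_transpose_injective {a : ℕ} (f : (Fin a → R) →ₗ[R] (Fin a → R))
    (hf : Function.Injective f) :
    Function.Injective (Matrix.toLin' (LinearMap.toMatrix' f).transpose) := by
  classical
  set M := LinearMap.toMatrix' f with hM
  have hMf : Function.Injective M.mulVec := by
    have h1 : ⇑(Matrix.toLin' M) = M.mulVec := funext (Matrix.toLin'_apply M)
    rw [hM, Matrix.toLin'_toMatrix'] at h1
    rw [← h1]
    exact hf
  have hdet := mccoy_det_mem_nonZeroDivisors M hMf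
  intro u v huv
  have huv' : M.transpose.mulVec u = M.transpose.mulVec v := by
    rw [← Matrix.toLin'_apply, ← Matrix.toLin'_apply]
    exact huv
  have h2 : M.det • u = M.det • v := by
    have h3 := congrArg (M.transpose.adjugate.mulVec) huv'
    rw [Matrix.mulVec_mulVec, Matrix.mulVec_mulVec, Matrix.adjugate_mul,
      Matrix.det_transpose, Matrix.smul_mulVec, Matrix.smul_mulVec,
      Matrix.one_mulVec, Matrix.one_mulVec] at h3
    exact h3
  funext i
  have h4 : (u i - v i) * M.det = 0 := by
    have := congrFun h2 i
    simp only [Pi.smul_apply, smul_eq_mul] at this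
    rw [sub_mul]
    rw [mul_comm (u i), mul_comm (v i), this, sub_self]
  have := (mem_nonZeroDivisors_iff_right.mp hdet) _ h4
  exact sub_eq_zero.mp this

end McCoy

section Res

variable (R : Type u) [CommRing R] (a : ℕ)

/-- The objects of the free resolution. -/
noncomputable def resX : ℕ → ModuleCat.{u} R
  | 0 => ModuleCat.of R (Fin a → R)
  | 1 => ModuleCat.of R (Fin a → R)
  | _ + 2 => ModuleCat.of R PUnit

variable {R a} (f : (Fin a → R) →ₗ[R] (Fin a → R))

/-- The differentials of the free resolution. -/
noncomputable def resD : ∀ n, resX R a (n + 1) ⟶ resX R a n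
  | 0 => ModuleCat.ofHom f
  | _ + 1 => 0

/-- The free resolution complex `⋯ → 0 → R^a → R^a`. -/
noncomputable def resC : ChainComplex (ModuleCat.{u} R) ℕ :=
  ChainComplex.of (resX R a) (resD f) (fun _ => Limits.zero_comp)

lemma resC_d10 : (resC f).d 1 0 = ModuleCat.ofHom f := ChainComplex.of_d (resX R a) (resD f) 0

lemma resC_d21 : (resC f).d 2 1 = 0 := ChainComplex.of_d (resX R a) (resD f) 1

instance resC_projective (n : ℕ) : CategoryTheory.Projective ((resC f).X n) := by
  match n with
  | 0 => exact ModuleCat.projective_of_free (Pi.basisFun R (Fin a))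
  | 1 => exact ModuleCat.projective_of_free (Pi.basisFun R (Fin a))
  | n + 2 =>
      exact ModuleCat.projective_of_free (Module.Basis.empty _ : Module.Basis PEmpty.{u+1} R PUnit.{u+1})


variable (N : ModuleCat.{u} R) (g : (Fin a → R) →ₗ[R] N)
  (hf : Function.Injective f) (hfg : Function.Exact f g) (hg : Function.Surjective g)

lemma moduleCat_descOpcycles_isIso {S : ShortComplex (ModuleCat.{u} R)}
    {N' : ModuleCat.{u} R} (τ : S.X₂ ⟶ N') (hw : S.f ≫ τ = 0) (hsurj : Function.Surjective τ)
    (hker : ∀ x₂, τ x₂ = 0 → ∃ x₁, S.f x₁ = x₂) :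
    IsIso (S.descOpcycles τ hw) := by
  have mono : Mono (S.descOpcycles τ hw) := by
    rw [ModuleCat.mono_iff_injective]
    have hp : Function.Surjective S.pOpcycles := by
      rw [← ModuleCat.epi_iff_surjective]; infer_instance
    intro x y hxy
    obtain ⟨x', rfl⟩ := hp x
    obtain ⟨y', rfl⟩ := hp y
    have happ : ∀ z, S.descOpcycles τ hw (S.pOpcycles z) = τ z := by
      intro z
      exact ConcreteCategory.congr_hom (S.p_descOpcycles τ hw) z
    have hxy' : τ x' = τ y' := by rw [← happ, ← happ]; exact hxy
    have hz0 : τ (x' - y') = 0 := by rw [map_sub, hxy', sub_self]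
    obtain ⟨z, hz⟩ := hker _ hz0
    have hpz : S.pOpcycles (S.f z) = 0 := ConcreteCategory.congr_hom S.f_pOpcycles z
    have hfin : S.pOpcycles x' - S.pOpcycles y' = 0 := by
      rw [← map_sub, ← hz, hpz]
    rw [← sub_eq_zero]; exact hfin
  have epi : Epi (S.descOpcycles τ hw) := by
    have h1 : Epi (S.pOpcycles ≫ S.descOpcycles τ hw) := by
      rw [S.p_descOpcycles]
      exact (ModuleCat.epi_iff_surjective τ).mpr hsurj
    exact @epi_of_epi _ _ _ _ _ _ _ h1
  exact @isIso_of_mono_of_epi _ _ _ _ _ _ mono epi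

noncomputable def resPi : resC f ⟶ (ChainComplex.single₀ (ModuleCat.{u} R)).obj N :=
  (ChainComplex.toSingle₀Equiv (resC f) N).symm ⟨ModuleCat.ofHom g, by
    rw [resC_d10]
    ext v
    exact hfg.apply_apply_eq_zero v⟩

lemma resPi_f0 : (resPi f N g hfg).f 0 = ModuleCat.ofHom g :=
  ChainComplex.toSingle₀Equiv_symm_apply_f_zero _ _

lemma resC_exactAt_succ (hf : Function.Injective f) (n : ℕ) : (resC f).ExactAt (n + 1) := by
  rw [(resC f).exactAt_iff' (n + 2) (n + 1) n (by simp) (by simp)]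
  match n with
  | 0 =>
    rw [ShortComplex.moduleCat_exact_iff]
    intro x hx
    refine ⟨0, ?_⟩
    have hx' : f x = 0 := by
      have : (resC f).d 1 0 x = 0 := hx
      rwa [resC_d10] at this
    have hx0 : x = 0 := hf (by rw [hx']; exact (map_zero f).symm)
    rw [map_zero, hx0]
  | m + 1 =>
    exact ShortComplex.exact_of_isZero_X₂ _ (ModuleCat.isZero_of_subsingleton (ModuleCat.of R PUnit))

lemma resPi_quasiIso (hf : Function.Injective f) (hg : Function.Surjective g) :
    QuasiIso (resPi f N g hfg) := by
  constructor
  intro i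
  match i with
  | n + 1 =>
    rw [quasiIsoAt_iff_exactAt (resPi f N g hfg) (n + 1) (resC_exactAt_succ f hf n)]
    exact ChainComplex.exactAt_succ_single_obj _ _
  | 0 =>
    rw [ChainComplex.quasiIsoAt₀_iff]
    have hg1 : ((HomologicalComplex.shortComplexFunctor' (ModuleCat.{u} R) _ 1 0 0).obj
        (resC f)).g = 0 := (resC f).shape 0 0 (by simp)
    rw [ShortComplex.quasiIso_iff_isIso_descOpcycles _ hg1 rfl rfl]
    have hτ : ((HomologicalComplex.shortComplexFunctor' (ModuleCat.{u} R) _ 1 0 0).map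
        (resPi f N g hfg)).τ₂ = ModuleCat.ofHom g := resPi_f0 f N g hfg
    apply moduleCat_descOpcycles_isIso
    · rw [hτ]; exact hg
    · intro x hx
      have hx' : g x = 0 := by rw [hτ] at hx; exact hx
      obtain ⟨z, hz⟩ := (hfg x).mp hx'
      refine ⟨z, ?_⟩
      have : ((HomologicalComplex.shortComplexFunctor' (ModuleCat.{u} R) _ 1 0 0).obj
          (resC f)).f = (resC f).d 1 0 := rfl
      rw [this, resC_d10]
      exact hz

lemma resLY_d (φ : (resC f).X 0 ⟶ ModuleCat.of R R) :
    ((resC f).linearYonedaObj R (ModuleCat.of R R)).d 0 1 φ = (resC f).d 1 0 ≫ φ := by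
  simp [ChainComplex.linearYonedaObj]
  rfl

noncomputable def resolution (hf : Function.Injective f) (hg : Function.Surjective g) :
    ProjectiveResolution N where
  complex := resC f
  π := resPi f N g hfg
  quasiIso := resPi_quasiIso f N g hfg hf hg

lemma dual_comm (v : Fin a → R) :
    (Pi.basisFun R (Fin a)).toDualEquiv (Matrix.toLin' (LinearMap.toMatrix' f).transpose v)
      = ((Pi.basisFun R (Fin a)).toDualEquiv v) ∘ₗ f := by
  have key : ((Pi.basisFun R (Fin a)).toDualEquiv.toLinearMap ∘ₗ
      Matrix.toLin' (LinearMap.toMatrix' f).transpose)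
      = (LinearMap.lcomp R R f) ∘ₗ (Pi.basisFun R (Fin a)).toDualEquiv.toLinearMap := by
    apply (Pi.basisFun R (Fin a)).ext; intro i
    apply (Pi.basisFun R (Fin a)).ext; intro j
    simp only [LinearMap.comp_apply, LinearEquiv.coe_coe, Module.Basis.toDualEquiv_apply,
      LinearMap.lcomp_apply]
    rw [Module.Basis.toDual_apply_left, Module.Basis.toDual_apply_right]
    simp [Pi.basisFun_repr, Pi.basisFun_apply, Matrix.toLin'_apply,
      Matrix.mulVec_single_one, Matrix.transpose_transpose, Matrix.transpose_apply,
      LinearMap.toMatrix'_apply]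
  exact DFunLike.congr_fun key v

theorem ext_one_pi (hf : Function.Injective f) (hfg : Function.Exact f g)
    (hg : Function.Surjective g) :
    ∃ π : (Fin a → R) →ₗ[R] extMod R 1 N (ModuleCat.of R R),
      Function.Surjective π ∧
        Function.Exact (Matrix.toLin' (LinearMap.toMatrix' f).transpose) π := by
  classical
  set Y := ModuleCat.of R R with hY
  set LY := (resC f).linearYonedaObj R Y with hLY
  set S := LY.sc' 0 1 2 with hS
  let E : extMod R 1 N Y ≅ S.moduleCatLeftHomologyData.H :=
    (resolution f N g hfg hf hg).isoExt 1 Y ≪≫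
      LY.homologyIsoSc' 0 1 2 (by simp) (by simp) ≪≫ S.moduleCatHomologyIso
  let EL : ↑(extMod R 1 N Y) ≃ₗ[R] ↑S.moduleCatLeftHomologyData.H := E.toLinearEquiv
  haveI hsub2 : Subsingleton ((resC f).X 2 ⟶ Y) := by
    constructor
    intro u v
    ext x
    haveI : Subsingleton ((resC f).X 2 : Type u) := inferInstanceAs (Subsingleton PUnit)
    rw [Subsingleton.elim x 0, map_zero, map_zero]
  haveI hsub3 : Subsingleton (↑S.X₃) := hsub2
  have hg0 : ∀ z : ↑S.X₂, S.g z = 0 := fun z => Subsingleton.elim _ _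
  let e2 : (Fin a → R) ≃ₗ[R] ↑S.X₂ := (Pi.basisFun R (Fin a)).toDualEquiv.trans (ModuleCat.homLinearEquiv (S := R) (M := (resC f).X 0) (N := Y)).symm
  let ι : (Fin a → R) →ₗ[R] ↥(LinearMap.ker S.g.hom) :=
    LinearMap.codRestrict (LinearMap.ker S.g.hom) e2.toLinearMap
      (fun v => LinearMap.mem_ker.mpr (hg0 _))
  let π : (Fin a → R) →ₗ[R] ↑(extMod R 1 N Y) :=
    EL.symm.toLinearMap ∘ₗ ((LinearMap.range S.moduleCatToCycles).mkQ ∘ₗ ι)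
  have hπ : ∀ v, π v = EL.symm ((LinearMap.range S.moduleCatToCycles).mkQ (ι v)) :=
    fun _ => rfl
  have hιv : ∀ v, (ι v : ↑S.X₂) = e2 v := fun v => rfl
  -- the key commutation
  have hkey : ∀ v, (e2 (Matrix.toLin' (LinearMap.toMatrix' f).transpose v) : ↑S.X₂)
      = S.f (e2 v) := by
    intro v
    have h1 : S.f (e2 v) = (resC f).d 1 0 ≫ (e2 v : (resC f).X 0 ⟶ Y) := resLY_d f (e2 v)
    rw [h1, resC_d10]
    exact congrArg ModuleCat.ofHom (dual_comm f v)
  have hrange : ∀ z : ↑S.X₂, (∃ w : ↑S.X₁, S.f w = z) ↔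
      ∃ v, e2 (Matrix.toLin' (LinearMap.toMatrix' f).transpose v) = z := by
    intro z
    constructor
    · rintro ⟨w, rfl⟩
      refine ⟨e2.symm w, ?_⟩
      rw [hkey]; exact congrArg (fun z => S.f z) (e2.apply_symm_apply w)
    · rintro ⟨v, rfl⟩
      exact ⟨e2 v, (hkey v).symm⟩
  refine ⟨π, ?_, ?_⟩
  · -- surjectivity
    intro z
    obtain ⟨k, hk⟩ := Submodule.mkQ_surjective _ (EL z)
    refine ⟨e2.symm (k : ↑S.X₂), ?_⟩
    rw [hπ]
    have : ι (e2.symm (k : ↑S.X₂)) = k := by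
      apply Subtype.ext
      rw [hιv, LinearEquiv.apply_symm_apply]
    rw [this, hk, LinearEquiv.symm_apply_apply]
  · -- exactness
    rw [LinearMap.exact_iff]
    apply Submodule.ext
    intro v
    rw [LinearMap.mem_ker, LinearMap.mem_range]
    rw [hπ]
    erw [LinearEquiv.map_eq_zero_iff]
    erw [Submodule.mkQ_apply, Submodule.Quotient.mk_eq_zero,
      LinearMap.mem_range]
    constructor
    · rintro ⟨w, hw⟩
      have hw' : S.f w = e2 v := by
        have := congrArg (Subtype.val) hw
        exact this
      obtain ⟨v', hv'⟩ := (hrange (e2 v)).mp ⟨w, hw'⟩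
      exact ⟨v', e2.injective hv'⟩
    · rintro ⟨v', rfl⟩
      obtain ⟨w, hw⟩ := (hrange (e2 (Matrix.toLin' (LinearMap.toMatrix' f).transpose v'))).mpr
        ⟨v', rfl⟩
      refine ⟨w, Subtype.ext ?_⟩
      rw [hιv]
      exact hw

end Res


/-- In the Gorenstein setting, if `P` admits an exact sequence
`0 → R^a →f R^a → P → 0`, then `Ext¹_R(P, R)` admits an exact sequence of the same form,
induced by the dual (transpose) of `f`, and `Ext¹_R(Ext¹_R(P, R), R) ≅ P`. -/
theorem ext_one_of_torsion_pd_le_one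
    (Λ : Type u) [CommRing Λ] [IsLocalRing Λ] [IsNoetherianRing Λ] (hΛ : IsRegularLocal Λ)
    (R : Type u) [CommRing R] [Algebra Λ R] [Module.Free Λ R] [Module.Finite Λ R]
    (hGor : ∃ φ : R ≃ₗ[Λ] (R →ₗ[Λ] Λ), ∀ r s x : R, φ (r * s) x = φ s (r * x))
    (a : ℕ) (P : Type u) [AddCommGroup P] [Module R P]
    (f : (Fin a → R) →ₗ[R] (Fin a → R)) (g : (Fin a → R) →ₗ[R] P)
    (hf : Function.Injective f) (hfg : Function.Exact f g) (hg : Function.Surjective g) :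
    (Function.Injective (Matrix.toLin' (LinearMap.toMatrix' f).transpose) ∧
      ∃ π : (Fin a → R) →ₗ[R] extMod R 1 (ModuleCat.of R P) (ModuleCat.of R R),
        Function.Surjective π ∧
          Function.Exact (Matrix.toLin' (LinearMap.toMatrix' f).transpose) π) ∧
    Nonempty
      ((extMod R 1 (extMod R 1 (ModuleCat.of R P) (ModuleCat.of R R)) (ModuleCat.of R R))
        ≃ₗ[R] P) := by
  have hT : Function.Injective (Matrix.toLin' (LinearMap.toMatrix' f).transpose) :=
    mccoy_transpose_injective f hf
  obtain ⟨π₁, hπ₁s, hπ₁e⟩ := ext_one_pi f (ModuleCat.of R P) g hf hfg hg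
  refine ⟨⟨hT, π₁, hπ₁s, hπ₁e⟩, ?_⟩
  obtain ⟨π₂, hπ₂s, hπ₂e⟩ := ext_one_pi (Matrix.toLin' (LinearMap.toMatrix' f).transpose)
      (extMod R 1 (ModuleCat.of R P) (ModuleCat.of R R)) π₁ hT hπ₁e hπ₁s
  have htt : Matrix.toLin' (LinearMap.toMatrix'
      (Matrix.toLin' (LinearMap.toMatrix' f).transpose)).transpose = f := by
    rw [LinearMap.toMatrix'_toLin', Matrix.transpose_transpose, Matrix.toLin'_toMatrix']
  rw [htt] at hπ₂e
  have hker : LinearMap.ker π₂ = LinearMap.ker g := by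
    rw [LinearMap.exact_iff.mp hπ₂e, LinearMap.exact_iff.mp hfg]
  exact ⟨((π₂.quotKerEquivOfSurjective hπ₂s).symm.trans
      (Submodule.quotEquivOfEq _ _ hker)).trans (g.quotKerEquivOfSurjective hg)⟩
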